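/- Measure of tubular neighborhoods of projective subspaces: let L be an ℓ-dimensional complex projective subspace of ℙ^n(ℂ) with the angular metric d and Lebesgue (Fubini–Study) measure. Then there is a constant C (depending only on n, ℓ) such that for all r > 0, Leb{u ∈ ℙ^n(ℂ) : d(u, L) ≤ r} ≤ C·r^{2(n−ℓ)}. -/

import Mathlib

open scoped InnerProductSpace
open MeasureTheory Metric Set Module
open scoped Pointwise ENNReal

private lemma my_det_prodMap {R M N : Type*} [Field R] [AddCommGroup M] [Module R M]
    [AddCommGroup N] [Module R N] [FiniteDimensional R M] [FiniteDimensional R N]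
    (f : M →ₗ[R] M) (g : N →ₗ[R] N) :
    LinearMap.det (f.prodMap g) = LinearMap.det f * LinearMap.det g := by
  classical
  let b1 := Module.finBasis R M
  let b2 := Module.finBasis R N
  rw [← LinearMap.det_toMatrix (b1.prod b2), LinearMap.toMatrix_prodMap,
    Matrix.det_fromBlocks_zero₂₁, LinearMap.det_toMatrix, LinearMap.det_toMatrix]

/-- Measure of tubular neighborhoods of projective subspaces: if `L` is an
`ℓ`-dimensional projective subspace of `ℙ^n(ℂ)` (the projectivization of an
`(ℓ+1)`-dimensional linear subspace of `ℂ^{n+1}`), then the measure (the natural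
rotation-invariant measure, realized on the unit sphere, which fibers over the
Fubini–Study measure) of the set of points at angular distance at most `r` from
`L` is `≤ C · r^{2(n−ℓ)}` for a constant `C = C(n, ℓ)`. -/
theorem measure_tubular_neighborhood {E : Type*} [NormedAddCommGroup E]
    [InnerProductSpace ℂ E] [FiniteDimensional ℂ E]
    [MeasurableSpace E] [BorelSpace E] {n ℓ : ℕ}
    (hdim : Module.finrank ℂ E = n + 1) (hℓ : ℓ ≤ n - 1)
    (L : Submodule ℂ E) (hL : Module.finrank ℂ L = ℓ + 1) :
    ∃ C : ℝ, 0 < C ∧ ∀ r : ℝ, 0 < r →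
      (Measure.addHaar : Measure E).toSphere
        {x : Metric.sphere (0 : E) 1 |
          sInf {s : ℝ | ∃ y ∈ L, y ≠ 0 ∧
            s = Real.sqrt (1 - ‖⟪(x : E), y⟫_ℂ‖ ^ 2 / ‖y‖ ^ 2)} ≤ r} ≤
        ENNReal.ofReal (C * r ^ (2 * (n - ℓ))) := by
  classical
  set m := 2 * (n - ℓ) with hm
  have hcompl : IsCompl L Lᗮ := Submodule.isCompl_orthogonal_of_hasOrthogonalProjection
  -- finrank computations
  have hfrk : Module.finrank ℂ L + Module.finrank ℂ Lᗮ = Module.finrank ℂ E :=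
    Submodule.finrank_add_finrank_orthogonal L
  have hKc : Module.finrank ℂ Lᗮ = n - ℓ := by rw [hL, hdim] at hfrk; omega
  have hKr : Module.finrank ℝ Lᗮ = m := by
    have h1 : Module.finrank ℝ ℂ * Module.finrank ℂ Lᗮ = Module.finrank ℝ Lᗮ :=
      Module.finrank_mul_finrank ℝ ℂ Lᗮ
    rw [Complex.finrank_real_complex, hKc] at h1
    omega
  -- projections as real-linear endomorphisms of E
  set P : E →ₗ[ℝ] E :=
    ((L.subtype.comp (L.orthogonalProjectionOnto).toLinearMap).restrictScalars ℝ) with hPdef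
  set Q : E →ₗ[ℝ] E :=
    ((Lᗮ.subtype.comp (Lᗮ.orthogonalProjectionOnto).toLinearMap).restrictScalars ℝ) with hQdef
  have hPQ : ∀ x : E, P x + Q x = x := fun x =>
    Submodule.starProjection_add_starProjection_orthogonal (K := L) x
  have hP1 : ∀ x : E, x ∈ L → P x = x := fun x hx =>
    Submodule.starProjection_eq_self_iff (K := L) |>.2 hx
  have hP2 : ∀ x : E, x ∈ Lᗮ → P x = 0 := by
    intro x hx
    show (↑(L.orthogonalProjectionOnto x) : E) = 0
    rw [Submodule.orthogonalProjectionOnto_apply_of_mem_orthogonal hx,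
      Submodule.coe_zero]
  have hQ1 : ∀ x : E, x ∈ L → Q x = 0 := by
    intro x hx
    show (↑(Lᗮ.orthogonalProjectionOnto x) : E) = 0
    rw [Submodule.orthogonalProjectionOnto_apply_of_mem_orthogonal
      (L.le_orthogonal_orthogonal hx), Submodule.coe_zero]
  have hQ2 : ∀ x : E, x ∈ Lᗮ → Q x = x := fun x hx =>
    Submodule.starProjection_eq_self_iff (K := Lᗮ) |>.2 hx
  have hPmem : ∀ x : E, P x ∈ L := fun x => (L.orthogonalProjectionOnto x).2
  have hQmem : ∀ x : E, Q x ∈ Lᗮ := fun x => (Lᗮ.orthogonalProjectionOnto x).2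
  have hPnorm : ∀ x : E, ‖P x‖ ≤ ‖x‖ := by
    intro x
    have h := (L.orthogonalProjectionOnto).le_of_opNorm_le (Submodule.orthogonalProjectionOnto_norm_le (K := L)) x
    rw [one_mul] at h
    exact h
  have hpyth : ∀ x : E, ‖P x‖ ^ 2 + ‖Q x‖ ^ 2 = ‖x‖ ^ 2 := by
    intro x
    have h := Submodule.norm_sq_eq_add_norm_sq_projection x L
    have h1 : ‖P x‖ = ‖L.orthogonalProjectionOnto x‖ := rfl
    have h2 : ‖Q x‖ = ‖Lᗮ.orthogonalProjectionOnto x‖ := rfl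
    rw [h1, h2]
    linarith
  -- the measure
  set μ : Measure E := Measure.addHaar with hμ
  set B : Set E := {y : E | ‖P y‖ ≤ 1 ∧ ‖Q y‖ ≤ 1} with hBdef
  have hBsub : B ⊆ Metric.closedBall (0 : E) 2 := by
    intro y hy
    simp only [Metric.mem_closedBall, dist_zero_right]
    calc ‖y‖ = ‖P y + Q y‖ := by rw [hPQ y]
      _ ≤ ‖P y‖ + ‖Q y‖ := norm_add_le _ _
      _ ≤ 2 := by linarith [hy.1, hy.2]
  have hBfin : μ B < ⊤ :=
    lt_of_le_of_lt (measure_mono hBsub) measure_closedBall_lt_top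
  refine ⟨(Module.finrank ℝ E : ℝ) * (μ B).toReal + 1, by positivity, ?_⟩
  intro r hr
  -- the superset given by the orthogonal projection
  set Tset : Set (Metric.sphere (0 : E) 1) := {x | ‖Q (x : E)‖ ≤ r} with hTdef
  have hTmeas : MeasurableSet Tset := by
    have hc : Continuous fun x : Metric.sphere (0 : E) 1 => ‖Q (x : E)‖ :=
      (Q.continuous_of_finiteDimensional.comp continuous_subtype_val).norm
    exact measurableSet_le hc.measurable measurable_const
  have hsub1 : {x : Metric.sphere (0 : E) 1 |
      sInf {s : ℝ | ∃ y ∈ L, y ≠ 0 ∧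
        s = Real.sqrt (1 - ‖⟪(x : E), y⟫_ℂ‖ ^ 2 / ‖y‖ ^ 2)} ≤ r} ⊆ Tset := by
    intro x hx
    simp only [Set.mem_setOf_eq] at hx ⊢
    have hxnorm : ‖(x : E)‖ = 1 := mem_sphere_zero_iff_norm.1 x.2
    have hLne : L ≠ ⊥ := by
      intro h
      rw [h, finrank_bot] at hL
      omega
    obtain ⟨y₀, hy₀L, hy₀0⟩ := (Submodule.ne_bot_iff L).1 hLne
    have hlb : ∀ s ∈ {s : ℝ | ∃ y ∈ L, y ≠ 0 ∧
        s = Real.sqrt (1 - ‖⟪(x : E), y⟫_ℂ‖ ^ 2 / ‖y‖ ^ 2)}, ‖Q (x : E)‖ ≤ s := by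
      rintro s ⟨y, hyL, hy0, rfl⟩
      have hy : (0 : ℝ) < ‖y‖ := norm_pos_iff.2 hy0
      have hinner : ⟪(x : E), y⟫_ℂ = ⟪P (x : E), y⟫_ℂ := by
        conv_lhs => rw [← hPQ (x : E)]
        rw [inner_add_left, Submodule.inner_left_of_mem_orthogonal hyL (hQmem (x : E)),
          add_zero]
      have hCS : ‖⟪P (x : E), y⟫_ℂ‖ ≤ ‖P (x : E)‖ * ‖y‖ := norm_inner_le_norm _ _
      have h1 : ‖⟪(x : E), y⟫_ℂ‖ ^ 2 / ‖y‖ ^ 2 ≤ ‖P (x : E)‖ ^ 2 := by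
        rw [hinner, div_le_iff₀ (by positivity)]
        calc ‖⟪P (x : E), y⟫_ℂ‖ ^ 2 ≤ (‖P (x : E)‖ * ‖y‖) ^ 2 :=
              pow_le_pow_left₀ (norm_nonneg _) hCS 2
          _ = ‖P (x : E)‖ ^ 2 * ‖y‖ ^ 2 := mul_pow _ _ 2
      have hQ2' : ‖Q (x : E)‖ ^ 2 ≤ 1 - ‖⟪(x : E), y⟫_ℂ‖ ^ 2 / ‖y‖ ^ 2 := by
        have h2 := hpyth (x : E)
        rw [hxnorm, one_pow] at h2
        linarith
      calc ‖Q (x : E)‖ = Real.sqrt (‖Q (x : E)‖ ^ 2) :=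
            (Real.sqrt_sq (norm_nonneg _)).symm
        _ ≤ Real.sqrt (1 - ‖⟪(x : E), y⟫_ℂ‖ ^ 2 / ‖y‖ ^ 2) := Real.sqrt_le_sqrt hQ2'
    have hSne : Set.Nonempty {s : ℝ | ∃ y ∈ L, y ≠ 0 ∧
        s = Real.sqrt (1 - ‖⟪(x : E), y⟫_ℂ‖ ^ 2 / ‖y‖ ^ 2)} :=
      ⟨_, ⟨y₀, hy₀L, hy₀0, rfl⟩⟩
    exact le_trans (le_csInf hSne hlb) hx
  -- the linear change of variables
  set f : E →ₗ[ℝ] E := P + r • Q with hfdef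
  have hsub2 : Set.Ioo (0 : ℝ) 1 • (Subtype.val '' Tset) ⊆ f '' B := by
    intro z hz
    rw [Set.mem_smul] at hz
    obtain ⟨c, hc, w, hw, rfl⟩ := hz
    obtain ⟨x, hxT, rfl⟩ := hw
    have hxnorm : ‖(x : E)‖ = 1 := mem_sphere_zero_iff_norm.1 x.2
    have hc0 : (0 : ℝ) < c := hc.1
    have hc1 : c ≤ 1 := hc.2.le
    set x' : E := c • (x : E) with hx'def
    have hx'norm : ‖x'‖ = c := by
      rw [hx'def, norm_smul, hxnorm, mul_one, Real.norm_eq_abs, abs_of_pos hc0]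
    have hQx' : ‖Q x'‖ ≤ r := by
      rw [hx'def, _root_.map_smul, norm_smul, Real.norm_eq_abs, abs_of_pos hc0]
      calc c * ‖Q (x : E)‖ ≤ 1 * r := mul_le_mul hc1 hxT (norm_nonneg _) zero_le_one
        _ = r := one_mul r
    have hPy : P (P x' + r⁻¹ • Q x') = P x' := by
      rw [map_add, hP1 _ (hPmem x'), hP2 _ (Lᗮ.smul_of_tower_mem r⁻¹ (hQmem x')), add_zero]
    have hQy : Q (P x' + r⁻¹ • Q x') = r⁻¹ • Q x' := by
      rw [map_add, hQ1 _ (hPmem x'), hQ2 _ (Lᗮ.smul_of_tower_mem r⁻¹ (hQmem x')), zero_add]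
    refine ⟨P x' + r⁻¹ • Q x', ⟨?_, ?_⟩, ?_⟩
    · rw [hPy]
      calc ‖P x'‖ ≤ ‖x'‖ := hPnorm x'
        _ ≤ 1 := by rw [hx'norm]; exact hc1
    · rw [hQy, norm_smul, Real.norm_eq_abs, abs_of_pos (inv_pos.2 hr)]
      calc r⁻¹ * ‖Q x'‖ ≤ r⁻¹ * r :=
            mul_le_mul_of_nonneg_left hQx' (inv_pos.2 hr).le
        _ = 1 := inv_mul_cancel₀ hr.ne'
    · show f (P x' + r⁻¹ • Q x') = x'
      rw [hfdef]
      simp only [LinearMap.add_apply, LinearMap.smul_apply]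
      rw [hPy, hQy, smul_smul, mul_inv_cancel₀ hr.ne', one_smul, hPQ]
  -- determinant computation
  haveI : FiniteDimensional ℝ L := FiniteDimensional.trans ℝ ℂ L
  haveI : FiniteDimensional ℝ Lᗮ := FiniteDimensional.trans ℝ ℂ Lᗮ
  set e : (L × Lᗮ) ≃ₗ[ℝ] E :=
    (Submodule.prodEquivOfIsCompl L Lᗮ hcompl).restrictScalars ℝ with hedef
  have he : ∀ p : L × Lᗮ, e p = (p.1 : E) + (p.2 : E) := fun p => rfl
  set g : (L × Lᗮ) →ₗ[ℝ] (L × Lᗮ) :=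
    LinearMap.prodMap (LinearMap.id : L →ₗ[ℝ] L) (r • (LinearMap.id : Lᗮ →ₗ[ℝ] Lᗮ))
    with hgdef
  have hconj : f = (e : (L × Lᗮ) →ₗ[ℝ] E) ∘ₗ g ∘ₗ (e.symm : E →ₗ[ℝ] (L × Lᗮ)) := by
    apply LinearMap.ext
    intro v
    obtain ⟨p, rfl⟩ := e.surjective v
    have hR : ((e : (L × Lᗮ) →ₗ[ℝ] E) ∘ₗ g ∘ₗ (e.symm : E →ₗ[ℝ] (L × Lᗮ))) (e p) =
        (p.1 : E) + r • (p.2 : E) := by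
      simp only [LinearMap.coe_comp, Function.comp_apply, LinearEquiv.coe_coe,
        LinearEquiv.symm_apply_apply, hgdef, LinearMap.prodMap_apply, LinearMap.smul_apply,
        LinearMap.id_coe, id_eq]
      rw [he (p.1, r • p.2)]
      norm_cast
    have hL1 : f ((p.1 : E) + (p.2 : E)) = (p.1 : E) + r • (p.2 : E) := by
      rw [hfdef]
      simp only [LinearMap.add_apply, LinearMap.smul_apply, map_add]
      rw [hP1 _ p.1.2, hP2 _ p.2.2, hQ1 _ p.1.2, hQ2 _ p.2.2]
      simp
    rw [hR, he p, hL1]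
  have hdet : LinearMap.det f = r ^ m := by
    rw [hconj, LinearMap.det_conj, hgdef, my_det_prodMap, LinearMap.det_id, one_mul,
      LinearMap.det_smul, LinearMap.det_id, mul_one, hKr]
  -- putting everything together
  have hrm : (0 : ℝ) < r ^ m := pow_pos hr m
  refine le_trans (measure_mono hsub1) ?_
  calc μ.toSphere Tset
      = (Module.finrank ℝ E : ℝ≥0∞) * μ (Set.Ioo (0 : ℝ) 1 • (Subtype.val '' Tset)) :=
        μ.toSphere_apply' hTmeas
    _ ≤ (Module.finrank ℝ E : ℝ≥0∞) * μ (f '' B) :=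
        mul_le_mul_right (measure_mono hsub2) _
    _ = (Module.finrank ℝ E : ℝ≥0∞) * (ENNReal.ofReal |LinearMap.det f| * μ B) := by
        rw [Measure.addHaar_image_linearMap]
    _ ≤ ENNReal.ofReal (((Module.finrank ℝ E : ℝ) * (μ B).toReal + 1) * r ^ m) := by
        rw [hdet, abs_of_pos hrm]
        rw [← ENNReal.ofReal_toReal hBfin.ne, ← ENNReal.ofReal_natCast (Module.finrank ℝ E),
          ← ENNReal.ofReal_mul (by positivity), ← ENNReal.ofReal_mul (by positivity)]
        apply ENNReal.ofReal_le_ofReal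
        have h0 : 0 ≤ (μ B).toReal := ENNReal.toReal_nonneg
        rw [ENNReal.toReal_ofReal h0]
        nlinarith [hrm.le, h0, mul_nonneg (mul_nonneg (Nat.cast_nonneg (Module.finrank ℝ E) : (0:ℝ) ≤ _) h0) hrm.le]
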